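/- Let α ∈ (0, k − 1/β), β ∈ (0,2), and let h_k(x) = Σ_{j=0}^{k}(-1)^j C(k,j)(x-j)_+^α. For j ∈ ℕ, j ≥ 1, and x ∈ [0,1] one has |h_k(j+x) − h_k(j)| ≤ K j^{α−k−1} for a constant K independent of j and x. -/

import Mathlib

open Finset Real

noncomputable def S (k : ℕ) (γ t : ℝ) : ℝ :=
  ∑ m ∈ Finset.range (k+1), (-1:ℝ)^m * (k.choose m : ℝ) * (t - m) ^ γ

lemma pascal_sum (k : ℕ) (f : ℕ → ℝ) :
    ∑ m ∈ range (k+2), (-1:ℝ)^m * ((k+1).choose m : ℝ) * f m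
    = ∑ m ∈ range (k+1), (-1:ℝ)^m * (k.choose m : ℝ) * f m
      - ∑ m ∈ range (k+1), (-1:ℝ)^m * (k.choose m : ℝ) * f (m+1) := by
  set a : ℕ → ℝ := fun m => (-1:ℝ)^m * ((k+1).choose m : ℝ) * f m with ha
  set b : ℕ → ℝ := fun m => (-1:ℝ)^m * (k.choose m : ℝ) * f m with hb
  calc ∑ m ∈ range (k+2), a m
      = ∑ m ∈ range (k+1), a (m+1) + a 0 := Finset.sum_range_succ' a (k+1)
    _ = ∑ m ∈ range (k+1), (b (m+1) + (-((-1:ℝ)^m * (k.choose m : ℝ) * f (m+1)))) + b 0 := by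
        congr 1
        · refine Finset.sum_congr rfl fun m _ => ?_
          simp only [ha, hb, Nat.choose_succ_succ]
          push_cast
          ring
        · simp [ha, hb]
    _ = (∑ m ∈ range (k+1), b (m+1) + b 0)
        - ∑ m ∈ range (k+1), (-1:ℝ)^m * (k.choose m : ℝ) * f (m+1) := by
        rw [Finset.sum_add_distrib]
        ring_nf
        simp [Finset.sum_neg_distrib]
        ring
    _ = ∑ m ∈ range (k+2), b m
        - ∑ m ∈ range (k+1), (-1:ℝ)^m * (k.choose m : ℝ) * f (m+1) := by
        rw [← Finset.sum_range_succ' b (k+1)]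
    _ = _ := by
        rw [Finset.sum_range_succ b (k+1)]
        simp [hb, Nat.choose_succ_self]

lemma hasDerivAt_S (k : ℕ) (γ t : ℝ) (ht : (k:ℝ) < t) :
    HasDerivAt (fun u => S k γ u) (γ * S k (γ-1) t) t := by
  have h : ∀ m ∈ range (k+1), HasDerivAt (fun u => (-1:ℝ)^m * (k.choose m : ℝ) * (u - m) ^ γ)
      ((-1:ℝ)^m * (k.choose m : ℝ) * (γ * (t - m) ^ (γ-1))) t := by
    intro m hm
    have hm' : (m:ℝ) ≤ (k:ℝ) := by
      exact_mod_cast Nat.lt_succ_iff.mp (Finset.mem_range.mp hm)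
    have htm : t - m ≠ 0 := by
      have : (0:ℝ) < t - m := by linarith
      linarith
    have h1 : HasDerivAt (fun u : ℝ => u - m) 1 t := (hasDerivAt_id t).sub_const (m:ℝ)
    have h2 := (Real.hasDerivAt_rpow_const (x := t - m) (p := γ) (Or.inl htm)).comp t h1
    simpa [mul_comm, mul_assoc, mul_left_comm] using h2.const_mul ((-1:ℝ)^m * (k.choose m : ℝ))
  have : HasDerivAt (fun u => ∑ m ∈ range (k+1), (-1:ℝ)^m * (k.choose m : ℝ) * (u - m) ^ γ)
      (∑ m ∈ range (k+1), (-1:ℝ)^m * (k.choose m : ℝ) * (γ * (t - m) ^ (γ-1))) t := HasDerivAt.fun_sum h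
  convert this using 1
  simp only [S, Finset.mul_sum]
  simp only [S, Finset.mul_sum]
  exact Finset.sum_congr rfl fun m _ => by ring

lemma S_bound (k : ℕ) : ∀ γ t : ℝ, (k:ℝ) < t → γ ≤ k →
    |S k γ t| ≤ (∏ i ∈ range k, |γ - i|) * (t - k) ^ (γ - k) := by
  induction k with
  | zero =>
    intro γ t ht hγ
    have ht' : (0:ℝ) < t := by exact_mod_cast ht
    have h0 : S 0 γ t = t ^ γ := by simp [S]
    rw [h0]
    simp only [Nat.cast_zero, Finset.range_zero, Finset.prod_empty, sub_zero, one_mul]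
    rw [abs_of_nonneg (Real.rpow_nonneg ht'.le γ)]
  | succ k ih =>
    intro γ t ht hγ
    push_cast at ht
    have hγ' : γ ≤ (k:ℝ) + 1 := by exact_mod_cast hγ
    have hS : S (k+1) γ t = S k γ t - S k γ (t-1) := by
      have := pascal_sum k (fun m => (t - m) ^ γ)
      simp only [S]
      convert this using 3
      push_cast
      ring_nf
    have hmvt : ∃ c ∈ Set.Ioo (t-1) t, γ * S k (γ-1) c = (S k γ t - S k γ (t-1)) / (t - (t-1)) := by
      apply exists_hasDerivAt_eq_slope (fun u => S k γ u) (fun u => γ * S k (γ-1) u) (by linarith)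
      · intro u hu
        have hu' : (k:ℝ) < u := by
          rcases hu with ⟨h1, h2⟩; linarith
        exact (hasDerivAt_S k γ u hu').continuousAt.continuousWithinAt
      · intro u hu
        exact hasDerivAt_S k γ u (by rcases hu with ⟨h1, h2⟩; linarith)
    obtain ⟨c, hc, hceq⟩ := hmvt
    have ht1 : t - (t-1) = 1 := by ring
    rw [ht1, div_one] at hceq
    rw [hS, ← hceq]
    have hck : (k:ℝ) < c := by rcases hc with ⟨h1, h2⟩; linarith
    have hbd := ih (γ-1) c hck (by linarith [hγ'])
    rw [abs_mul]
    have hprod : |γ| * ∏ i ∈ range k, |(γ-1) - i| = ∏ i ∈ range (k+1), |γ - i| := by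
      rw [Finset.prod_range_succ' (fun i => |γ - i|) k]
      simp only [Nat.cast_zero, sub_zero]
      rw [mul_comm]
      congr 1
      exact Finset.prod_congr rfl fun i _ => by push_cast; ring_nf
    have hrw : (c - k) ^ (γ - 1 - k) ≤ (t - (k+1)) ^ (γ - (k+1)) := by
      have h1 : (0:ℝ) < t - (k+1) := by linarith
      have h2 : t - (k+1) ≤ c - k := by rcases hc with ⟨ha, hb⟩; linarith
      have h3 : γ - 1 - (k:ℝ) ≤ 0 := by linarith [hγ']
      have := Real.rpow_le_rpow_of_nonpos h1 h2 h3
      calc (c - k) ^ (γ - 1 - k) ≤ (t - (k+1)) ^ (γ - 1 - k) := this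
        _ = (t - (k+1)) ^ (γ - (k+1)) := by congr 1; ring
    calc |γ| * |S k (γ-1) c| ≤ |γ| * ((∏ i ∈ range k, |(γ-1) - i|) * (c - k) ^ (γ - 1 - k)) := by
          exact mul_le_mul_of_nonneg_left hbd (abs_nonneg γ)
      _ ≤ |γ| * ((∏ i ∈ range k, |(γ-1) - i|) * (t - (k+1)) ^ (γ - (k+1))) := by
          apply mul_le_mul_of_nonneg_left _ (abs_nonneg γ)
          exact mul_le_mul_of_nonneg_left hrw (Finset.prod_nonneg fun i _ => abs_nonneg _)
      _ = (∏ i ∈ range (k+1), |γ - i|) * (t - (k+1:ℕ)) ^ (γ - (k+1:ℕ)) := by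
          rw [← hprod]; push_cast; ring

theorem stmt17 (k : ℕ) (hk : 1 ≤ k) (β α : ℝ) (hβ : β ∈ Set.Ioo (0:ℝ) 2)
    (hα : α ∈ Set.Ioo 0 ((k:ℝ) - 1/β)) :
    ∃ K : ℝ, ∀ j : ℕ, 1 ≤ j → ∀ x ∈ Set.Icc (0:ℝ) 1,
      |(∑ m ∈ Finset.range (k+1), (-1:ℝ)^m * (k.choose m : ℝ) * (max ((j:ℝ) + x - m) 0) ^ α) -
       (∑ m ∈ Finset.range (k+1), (-1:ℝ)^m * (k.choose m : ℝ) * (max ((j:ℝ) - m) 0) ^ α)|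
        ≤ K * (j:ℝ) ^ (α - (k:ℝ) - 1) := by
  obtain ⟨hα0, hαk'⟩ := hα
  have hβ0 : 0 < β := hβ.1
  have hαk : α < k := by
    have : 0 < 1/β := by positivity
    linarith
  set C1 : ℝ := |α| * ∏ i ∈ Finset.range k, |α - 1 - i| with hC1
  set K1 : ℝ := C1 * 2 ^ ((k:ℝ) + 1 - α) with hK1
  set K2 : ℝ := 2^(k+1) * ((2*(k:ℝ)+3))^α * ((2*(k:ℝ)+2))^((k:ℝ)+1-α) with hK2
  refine ⟨max K1 K2, fun j hj x hx => ?_⟩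
  obtain ⟨hx0, hx1⟩ := hx
  have hj1 : (1:ℝ) ≤ (j:ℝ) := by exact_mod_cast hj
  have hjpos : (0:ℝ) < (j:ℝ) := by linarith
  have htpow : (0:ℝ) < (j:ℝ) ^ (α - (k:ℝ) - 1) := Real.rpow_pos_of_pos hjpos _
  have hK1nn : 0 ≤ K1 := by
    apply mul_nonneg
    · exact mul_nonneg (abs_nonneg _) (Finset.prod_nonneg fun i _ => abs_nonneg _)
    · positivity
  by_cases hjbig : 2*k + 2 ≤ j
  · -- large j case
    have hjk : (k:ℝ) + 1 ≤ (j:ℝ) := by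
      have : (2*k+2 : ℝ) ≤ (j:ℝ) := by exact_mod_cast hjbig
      have hk' : (0:ℝ) ≤ k := Nat.cast_nonneg k
      linarith
    have hA : ∀ m ∈ Finset.range (k+1),
        (-1:ℝ)^m * (k.choose m : ℝ) * (max ((j:ℝ) + x - m) 0) ^ α
        = (-1:ℝ)^m * (k.choose m : ℝ) * (((j:ℝ)+x) - m) ^ α := by
      intro m hm
      have hm' : (m:ℝ) ≤ (k:ℝ) := by
        exact_mod_cast Nat.lt_succ_iff.mp (Finset.mem_range.mp hm)
      rw [max_eq_left (by linarith)]
    have hB : ∀ m ∈ Finset.range (k+1),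
        (-1:ℝ)^m * (k.choose m : ℝ) * (max ((j:ℝ) - m) 0) ^ α
        = (-1:ℝ)^m * (k.choose m : ℝ) * ((j:ℝ) - m) ^ α := by
      intro m hm
      have hm' : (m:ℝ) ≤ (k:ℝ) := by
        exact_mod_cast Nat.lt_succ_iff.mp (Finset.mem_range.mp hm)
      rw [max_eq_left (by linarith)]
    rw [Finset.sum_congr rfl hA, Finset.sum_congr rfl hB]
    have hgoal : |S k α ((j:ℝ)+x) - S k α (j:ℝ)| ≤ max K1 K2 * (j:ℝ) ^ (α - (k:ℝ) - 1) := by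
      rcases eq_or_lt_of_le hx0 with hx0' | hx0'
      · rw [← hx0']
        simp only [add_zero, sub_self, abs_zero]
        positivity
      · -- MVT on [j, j+x]
        obtain ⟨c, hc, hceq⟩ := exists_hasDerivAt_eq_slope (fun u => S k α u)
          (fun u => α * S k (α-1) u) (by linarith : (j:ℝ) < (j:ℝ) + x)
          (fun u hu => (hasDerivAt_S k α u (by
            rcases hu with ⟨h1, h2⟩; linarith)).continuousAt.continuousWithinAt)
          (fun u hu => hasDerivAt_S k α u (by rcases hu with ⟨h1, h2⟩; linarith))
        have hxne : (j:ℝ) + x - (j:ℝ) = x := by ring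
        rw [hxne] at hceq
        have hdiff : S k α ((j:ℝ)+x) - S k α (j:ℝ) = α * S k (α-1) c * x := by
          field_simp at hceq
          linarith [hceq]
        rw [hdiff]
        have hck : (k:ℝ) < c := by rcases hc with ⟨h1, h2⟩; linarith
        have hbd := S_bound k (α-1) c hck (by linarith)
        have hcj : (j:ℝ) ≤ c := le_of_lt hc.1
        have hjk2 : (0:ℝ) < (j:ℝ) - k := by linarith
        have hexp : α - 1 - (k:ℝ) ≤ 0 := by linarith
        have hmono : (c - k) ^ (α - 1 - (k:ℝ)) ≤ ((j:ℝ) - k) ^ (α - 1 - (k:ℝ)) :=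
          Real.rpow_le_rpow_of_nonpos hjk2 (by linarith) hexp
        have hhalf : (j:ℝ)/2 ≤ (j:ℝ) - k := by
          have : (2*k+2 : ℝ) ≤ (j:ℝ) := by exact_mod_cast hjbig
          linarith
        have hmono2 : ((j:ℝ) - k) ^ (α - 1 - (k:ℝ)) ≤ ((j:ℝ)/2) ^ (α - 1 - (k:ℝ)) :=
          Real.rpow_le_rpow_of_nonpos (by positivity) hhalf hexp
        have hdivpow : ((j:ℝ)/2) ^ (α - 1 - (k:ℝ))
            = (j:ℝ) ^ (α - (k:ℝ) - 1) * 2 ^ ((k:ℝ) + 1 - α) := by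
          rw [Real.div_rpow hjpos.le (by norm_num : (0:ℝ) ≤ 2)]
          rw [div_eq_mul_inv, ← Real.rpow_neg (by norm_num : (0:ℝ) ≤ 2)]
          congr 1
          · congr 1; ring
          · congr 1; ring
        calc |α * S k (α-1) c * x| = |α| * |S k (α-1) c| * |x| := by
              rw [abs_mul, abs_mul]
          _ ≤ |α| * |S k (α-1) c| * 1 := by
              apply mul_le_mul_of_nonneg_left _ (by positivity)
              rw [abs_of_nonneg hx0]; exact hx1
          _ = |α| * |S k (α-1) c| := mul_one _
          _ ≤ |α| * ((∏ i ∈ Finset.range k, |α - 1 - i|) * (c - k) ^ (α - 1 - (k:ℝ))) := by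
              exact mul_le_mul_of_nonneg_left hbd (abs_nonneg α)
          _ ≤ |α| * ((∏ i ∈ Finset.range k, |α - 1 - i|) * (((j:ℝ)/2) ^ (α - 1 - (k:ℝ)))) := by
              apply mul_le_mul_of_nonneg_left _ (abs_nonneg α)
              exact mul_le_mul_of_nonneg_left (le_trans hmono hmono2)
                (Finset.prod_nonneg fun i _ => abs_nonneg _)
          _ = K1 * (j:ℝ) ^ (α - (k:ℝ) - 1) := by
              rw [hdivpow, hK1, hC1]; ring
          _ ≤ max K1 K2 * (j:ℝ) ^ (α - (k:ℝ) - 1) := by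
              exact mul_le_mul_of_nonneg_right (le_max_left _ _) htpow.le
    exact hgoal
  · -- small j case
    push_neg at hjbig
    have hjle : (j:ℝ) ≤ 2*(k:ℝ) + 2 := by
      have : (j:ℝ) ≤ (2*k+1 : ℕ) := by exact_mod_cast Nat.lt_succ_iff.mp hjbig
      push_cast at this; linarith
    have hsum_bd : ∀ y : ℝ, 0 ≤ y → y ≤ 1 →
        |∑ m ∈ Finset.range (k+1), (-1:ℝ)^m * (k.choose m : ℝ) * (max ((j:ℝ) + y - m) 0) ^ α|
        ≤ 2^k * (2*(k:ℝ)+3)^α := by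
      intro y hy0 hy1
      calc |∑ m ∈ Finset.range (k+1), (-1:ℝ)^m * (k.choose m : ℝ) * (max ((j:ℝ) + y - m) 0) ^ α|
          ≤ ∑ m ∈ Finset.range (k+1), |(-1:ℝ)^m * (k.choose m : ℝ) * (max ((j:ℝ) + y - m) 0) ^ α| :=
            Finset.abs_sum_le_sum_abs _ _
        _ ≤ ∑ m ∈ Finset.range (k+1), (k.choose m : ℝ) * (2*(k:ℝ)+3)^α := by
            apply Finset.sum_le_sum
            intro m hm
            rw [abs_mul, abs_mul, abs_pow, abs_neg, abs_one, one_pow, one_mul,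
              Nat.abs_cast]
            apply mul_le_mul_of_nonneg_left _ (Nat.cast_nonneg _)
            rw [abs_of_nonneg (Real.rpow_nonneg (le_max_right _ _) α)]
            apply Real.rpow_le_rpow (le_max_right _ _) _ hα0.le
            have : (j:ℝ) + y - m ≤ 2*(k:ℝ)+3 := by
              have : (0:ℝ) ≤ m := Nat.cast_nonneg m
              linarith
            exact max_le this (by linarith)
        _ = (∑ m ∈ Finset.range (k+1), (k.choose m : ℝ)) * (2*(k:ℝ)+3)^α := by
            rw [Finset.sum_mul]
        _ = 2^k * (2*(k:ℝ)+3)^α := by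
            congr 1
            rw [← Nat.cast_sum]
            rw [Nat.sum_range_choose]
            push_cast; ring
    have hb1 := hsum_bd x hx0 hx1
    have hb2 := hsum_bd 0 le_rfl zero_le_one
    simp only [add_zero] at hb2
    have htri : |(∑ m ∈ Finset.range (k+1), (-1:ℝ)^m * (k.choose m : ℝ) * (max ((j:ℝ) + x - m) 0) ^ α) -
       (∑ m ∈ Finset.range (k+1), (-1:ℝ)^m * (k.choose m : ℝ) * (max ((j:ℝ) - m) 0) ^ α)|
        ≤ 2^(k+1) * (2*(k:ℝ)+3)^α := by
      calc _ ≤ |∑ m ∈ Finset.range (k+1), (-1:ℝ)^m * (k.choose m : ℝ) * (max ((j:ℝ) + x - m) 0) ^ α|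
          + |∑ m ∈ Finset.range (k+1), (-1:ℝ)^m * (k.choose m : ℝ) * (max ((j:ℝ) - m) 0) ^ α| :=
            abs_sub _ _
        _ ≤ 2^k * (2*(k:ℝ)+3)^α + 2^k * (2*(k:ℝ)+3)^α := add_le_add hb1 hb2
        _ = 2^(k+1) * (2*(k:ℝ)+3)^α := by ring
    have hpow_low : ((2*(k:ℝ)+2)) ^ (α - (k:ℝ) - 1) ≤ (j:ℝ) ^ (α - (k:ℝ) - 1) :=
      Real.rpow_le_rpow_of_nonpos hjpos hjle (by linarith)
    have hK2val : K2 * ((2*(k:ℝ)+2)) ^ (α - (k:ℝ) - 1) = 2^(k+1) * (2*(k:ℝ)+3)^α := by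
      rw [hK2]
      rw [mul_assoc, ← Real.rpow_add (by positivity : (0:ℝ) < 2*(k:ℝ)+2)]
      rw [show (k:ℝ) + 1 - α + (α - (k:ℝ) - 1) = 0 by ring, Real.rpow_zero, mul_one]
    calc |(∑ m ∈ Finset.range (k+1), (-1:ℝ)^m * (k.choose m : ℝ) * (max ((j:ℝ) + x - m) 0) ^ α) -
       (∑ m ∈ Finset.range (k+1), (-1:ℝ)^m * (k.choose m : ℝ) * (max ((j:ℝ) - m) 0) ^ α)|
        ≤ 2^(k+1) * (2*(k:ℝ)+3)^α := htri
      _ = K2 * ((2*(k:ℝ)+2)) ^ (α - (k:ℝ) - 1) := hK2val.symm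
      _ ≤ K2 * (j:ℝ) ^ (α - (k:ℝ) - 1) := by
          apply mul_le_mul_of_nonneg_left hpow_low
          rw [hK2]; positivity
      _ ≤ max K1 K2 * (j:ℝ) ^ (α - (k:ℝ) - 1) :=
          mul_le_mul_of_nonneg_right (le_max_right _ _) htpow.le
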